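/- For all real s ≥ 1, F(s) := ∫_0^π cos(2π s cos θ) dθ satisfies F(s) ≤ π - ε for some ε > 0 independent of s. -/

import Mathlib

open Real

theorem stmt1 :
    ∃ ε > (0:ℝ), ∀ s : ℝ, 1 ≤ s →
      (∫ θ in (0:ℝ)..π, Real.cos (2 * π * s * Real.cos θ)) ≤ π - ε := by
  refine ⟨2 - 1/π, by
      have h1 : (1:ℝ)/π < 1 := by
        rw [div_lt_one Real.pi_pos]; linarith [Real.pi_gt_three]
      linarith, ?_⟩
  intro s hs
  set c : ℝ := 2 * π * s with hc
  have hπ : (0:ℝ) < π := Real.pi_pos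
  have hcpos : 0 < c := by positivity
  have hc2π : 2 * π ≤ c := by nlinarith
  -- antiderivative part
  have hderiv : ∀ θ ∈ Set.uIcc (0:ℝ) π,
      HasDerivAt (fun x => -Real.sin (c * Real.cos x) / c)
        (Real.cos (c * Real.cos θ) * Real.sin θ) θ := by
    intro θ _
    have h1 : HasDerivAt (fun x : ℝ => c * Real.cos x) (c * (-Real.sin θ)) θ :=
      (Real.hasDerivAt_cos θ).const_mul c
    have h2 : HasDerivAt (fun x : ℝ => Real.sin (c * Real.cos x))
        (Real.cos (c * Real.cos θ) * (c * (-Real.sin θ))) θ :=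
      (Real.hasDerivAt_sin _).comp θ h1
    have h3 := (h2.neg).div_const c
    refine h3.congr_deriv ?_
    rw [div_eq_iff hcpos.ne']
    ring
  have hcont : Continuous fun θ : ℝ => Real.cos (c * Real.cos θ) * Real.sin θ := by
    continuity
  have hpart1 : (∫ θ in (0:ℝ)..π, Real.cos (c * Real.cos θ) * Real.sin θ)
      = 2 * Real.sin c / c := by
    rw [intervalIntegral.integral_eq_sub_of_hasDerivAt hderiv
      (hcont.intervalIntegrable 0 π)]
    simp [Real.cos_pi, Real.cos_zero, mul_comm, mul_neg, Real.sin_neg]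
    ring
  have hcont2 : Continuous fun θ : ℝ => Real.cos (c * Real.cos θ) * (1 - Real.sin θ) := by
    continuity
  have hpart2 : (∫ θ in (0:ℝ)..π, Real.cos (c * Real.cos θ) * (1 - Real.sin θ))
      ≤ π - 2 := by
    have hmono : ∀ θ ∈ Set.Icc (0:ℝ) π,
        Real.cos (c * Real.cos θ) * (1 - Real.sin θ) ≤ 1 - Real.sin θ := by
      intro θ hθ
      have h1 : Real.sin θ ≤ 1 := Real.sin_le_one θ
      have h2 : Real.cos (c * Real.cos θ) ≤ 1 := Real.cos_le_one _
      nlinarith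
    have hint : (∫ θ in (0:ℝ)..π, (1 - Real.sin θ)) = π - 2 := by
      rw [intervalIntegral.integral_sub ((continuous_const : Continuous fun _ : ℝ => (1:ℝ)).intervalIntegrable 0 π)
        (Continuous.intervalIntegrable Real.continuous_sin 0 π)]
      simp [integral_sin]
      ring
    calc (∫ θ in (0:ℝ)..π, Real.cos (c * Real.cos θ) * (1 - Real.sin θ))
        ≤ ∫ θ in (0:ℝ)..π, (1 - Real.sin θ) := by
          apply intervalIntegral.integral_mono_on hπ.le
            (hcont2.intervalIntegrable 0 π)
            ((continuous_const.sub Real.continuous_sin).intervalIntegrable 0 π)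
            hmono
      _ = π - 2 := hint
  have hsplit : (∫ θ in (0:ℝ)..π, Real.cos (c * Real.cos θ))
      = (∫ θ in (0:ℝ)..π, Real.cos (c * Real.cos θ) * Real.sin θ)
        + ∫ θ in (0:ℝ)..π, Real.cos (c * Real.cos θ) * (1 - Real.sin θ) := by
    rw [← intervalIntegral.integral_add (hcont.intervalIntegrable 0 π)
      (hcont2.intervalIntegrable 0 π)]
    congr 1
    ext θ
    ring
  have hbound1 : 2 * Real.sin c / c ≤ 1 / π := by
    rw [div_le_div_iff₀ hcpos hπ]
    have h1 : Real.sin c ≤ 1 := Real.sin_le_one c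
    nlinarith
  have hgoal : (∫ θ in (0:ℝ)..π, Real.cos (c * Real.cos θ)) ≤ π - (2 - 1/π) := by
    rw [hsplit, hpart1]
    have := hbound1
    linarith
  have heq : (∫ θ in (0:ℝ)..π, Real.cos (2 * π * s * Real.cos θ))
      = ∫ θ in (0:ℝ)..π, Real.cos (c * Real.cos θ) := rfl
  linarith [hgoal, heq ▸ hgoal]
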